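/- For every h ∈ H, writing h = h₁w₁ + h₂w₂ + h₃w₃ with h₁, h₂, h₃ ∈ [0,1), the coordinate h₁ belongs to the set {0, μ₁/μ, 2μ₁/μ, …, (μ−μ₁)/μ}; moreover, for each l ∈ {0, 1, …, μ/μ₁ − 1}, exactly μ₁ points h ∈ H satisfy h₁ = lμ₁/μ. (The analogous statements hold for the coordinates h₂ with μ₂ and h₃ with μ₃.) -/

import Mathlib

noncomputable section

/-- The coercion of an integer vector in `ℤ³` to `ℝ³`. -/
def coe3 (v : Fin 3 → ℤ) : Fin 3 → ℝ := fun i => (v i : ℝ)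

/-- A vector of `ℤ³` is primitive if the greatest common divisor of its components is 1. -/
def IsPrimitive (v : Fin 3 → ℤ) : Prop := Int.gcd (v 0) (Int.gcd (v 1) (v 2)) = 1

/-- The fundamental parallelepiped spanned by two vectors:
`◊(a,b) = {s•a + t•b : s,t ∈ [0,1)}`. -/
def para2 (a b : Fin 3 → ℝ) : Set (Fin 3 → ℝ) :=
  {x | ∃ s t : ℝ, 0 ≤ s ∧ s < 1 ∧ 0 ≤ t ∧ t < 1 ∧ x = s • a + t • b}

/-- The fundamental parallelepiped spanned by three vectors:
`◊(a,b,c) = {s•a + t•b + u•c : s,t,u ∈ [0,1)}`. -/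
def para3 (a b c : Fin 3 → ℝ) : Set (Fin 3 → ℝ) :=
  {x | ∃ s t u : ℝ, 0 ≤ s ∧ s < 1 ∧ 0 ≤ t ∧ t < 1 ∧ 0 ≤ u ∧ u < 1 ∧
    x = s • a + t • b + u • c}

/-- The integral points `ℤ³ ∩ ◊(a,b)` of a two-dimensional fundamental parallelepiped. -/
def H2pts (a b : Fin 3 → ℤ) : Set (Fin 3 → ℤ) := {x | coe3 x ∈ para2 (coe3 a) (coe3 b)}

/-- The integral points `ℤ³ ∩ ◊(a,b,c)` of a three-dimensional fundamental parallelepiped. -/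
def H3pts (a b c : Fin 3 → ℤ) : Set (Fin 3 → ℤ) :=
  {x | coe3 x ∈ para3 (coe3 a) (coe3 b) (coe3 c)}

lemma coe3_add (x y : Fin 3 → ℤ) : coe3 (x + y) = coe3 x + coe3 y := by
  funext i; simp [coe3]

lemma coe3_sub (x y : Fin 3 → ℤ) : coe3 (x - y) = coe3 x - coe3 y := by
  funext i; simp [coe3]

lemma coe3_zsmul (z : ℤ) (x : Fin 3 → ℤ) : coe3 (z • x) = (z : ℝ) • coe3 x := by
  funext i; simp [coe3]

lemma coe3_injective : Function.Injective coe3 := by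
  intro x y h
  funext i
  have := congrFun h i
  simpa [coe3] using this

section Key

variable {v₁ v₂ v₃ : Fin 3 → ℤ}
  (hli : LinearIndependent ℝ ![coe3 v₁, coe3 v₂, coe3 v₃])

def bas : Module.Basis (Fin 3) ℝ (Fin 3 → ℝ) :=
  basisOfLinearIndependentOfCardEqFinrank hli (by simp)

def cf (i : Fin 3) : (Fin 3 → ℝ) →ₗ[ℝ] ℝ := (bas hli).coord i

lemma cf_apply (i : Fin 3) (a b c : ℝ) :
    cf hli i (a • coe3 v₁ + b • coe3 v₂ + c • coe3 v₃) = ![a, b, c] i := by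
  have hb : ∀ j, bas hli j = ![coe3 v₁, coe3 v₂, coe3 v₃] j := fun j => by
    rw [bas, coe_basisOfLinearIndependentOfCardEqFinrank]
  have h1 : coe3 v₁ = bas hli 0 := (hb 0).symm
  have h2 : coe3 v₂ = bas hli 1 := (hb 1).symm
  have h3 : coe3 v₃ = bas hli 2 := (hb 2).symm
  rw [h1, h2, h3, cf]
  simp only [map_add, map_smul, Module.Basis.coord_apply, Module.Basis.repr_self]
  fin_cases i <;> simp [Finsupp.single_apply]

lemma repr_decomp (x : Fin 3 → ℝ) :
    x = cf hli 0 x • coe3 v₁ + cf hli 1 x • coe3 v₂ + cf hli 2 x • coe3 v₃ := by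
  have hb : (⇑(bas hli) : Fin 3 → Fin 3 → ℝ) = ![coe3 v₁, coe3 v₂, coe3 v₃] := by
    rw [bas, coe_basisOfLinearIndependentOfCardEqFinrank]
  conv_lhs => rw [← (bas hli).sum_repr x]
  rw [Fin.sum_univ_three]
  simp [cf, Module.Basis.coord_apply, hb]

lemma mem_H3_iff (h : Fin 3 → ℤ) :
    h ∈ H3pts v₁ v₂ v₃ ↔ ∀ i, cf hli i (coe3 h) ∈ Set.Ico (0:ℝ) 1 := by
  constructor
  · rintro ⟨s, t, u, hs0, hs1, ht0, ht1, hu0, hu1, hx⟩ i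
    rw [hx, cf_apply]
    fin_cases i <;> simp [hs0, hs1, ht0, ht1, hu0, hu1]
  · intro hi
    refine ⟨cf hli 0 (coe3 h), cf hli 1 (coe3 h), cf hli 2 (coe3 h),
      (hi 0).1, (hi 0).2, (hi 1).1, (hi 1).2, (hi 2).1, (hi 2).2, ?_⟩
    exact repr_decomp hli (coe3 h)

lemma mem_H2_iff (h : Fin 3 → ℤ) :
    h ∈ H2pts v₂ v₃ ↔ cf hli 0 (coe3 h) = 0 ∧
      cf hli 1 (coe3 h) ∈ Set.Ico (0:ℝ) 1 ∧ cf hli 2 (coe3 h) ∈ Set.Ico (0:ℝ) 1 := by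
  constructor
  · rintro ⟨s, t, hs0, hs1, ht0, ht1, hx⟩
    have hx' : coe3 h = (0:ℝ) • coe3 v₁ + s • coe3 v₂ + t • coe3 v₃ := by
      rw [hx]; module
    rw [hx', cf_apply, cf_apply, cf_apply]
    refine ⟨rfl, ⟨hs0, hs1⟩, ⟨ht0, ht1⟩⟩
  · rintro ⟨h0, ⟨h10, h11⟩, ⟨h20, h21⟩⟩
    set b := cf hli 1 (coe3 h) with hb
    set c := cf hli 2 (coe3 h) with hc
    have hd := repr_decomp hli (coe3 h)
    rw [h0, zero_smul, zero_add] at hd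
    exact ⟨b, c, h10, h11, h20, h21, hd⟩

lemma coe3_zero : coe3 0 = 0 := by funext i; simp [coe3]

lemma cf_v1 (i : Fin 3) : cf hli i (coe3 v₁) = ![(1:ℝ),0,0] i := by
  have : coe3 v₁ = (1:ℝ) • coe3 v₁ + (0:ℝ) • coe3 v₂ + (0:ℝ) • coe3 v₃ := by module
  rw [this, cf_apply]

lemma cf_v2 (i : Fin 3) : cf hli i (coe3 v₂) = ![(0:ℝ),1,0] i := by
  have : coe3 v₂ = (0:ℝ) • coe3 v₁ + (1:ℝ) • coe3 v₂ + (0:ℝ) • coe3 v₃ := by module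
  rw [this, cf_apply]

lemma cf_v3 (i : Fin 3) : cf hli i (coe3 v₃) = ![(0:ℝ),0,1] i := by
  have : coe3 v₃ = (0:ℝ) • coe3 v₁ + (0:ℝ) • coe3 v₂ + (1:ℝ) • coe3 v₃ := by module
  rw [this, cf_apply]

def Lgrp (v₁ v₂ v₃ : Fin 3 → ℤ) : AddSubgroup (Fin 3 → ℤ) := AddSubgroup.closure {v₁, v₂, v₃}

def phi : (Fin 3 → ℤ) →+ AddCircle (1:ℝ) :=
  (QuotientAddGroup.mk' (AddSubgroup.zmultiples (1:ℝ))).comp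
    (((cf hli 0).toAddMonoidHom).comp (AddMonoidHom.mk' coe3 coe3_add))

lemma phi_apply (x : Fin 3 → ℤ) :
    phi hli x = ((cf hli 0 (coe3 x) : ℝ) : AddCircle (1:ℝ)) := rfl

lemma phi_ker : Lgrp v₁ v₂ v₃ ≤ (phi hli).ker := by
  rw [Lgrp, AddSubgroup.closure_le]
  intro x hx
  simp only [Set.mem_insert_iff, Set.mem_singleton_iff] at hx
  rcases hx with rfl | rfl | rfl <;>
    simp only [SetLike.mem_coe, AddMonoidHom.mem_ker, phi_apply]
  · rw [cf_v1]
    rw [AddCircle.coe_eq_zero_iff]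
    exact ⟨1, by simp⟩
  · rw [cf_v2]; simp
  · rw [cf_v3]; simp

def phi' : ((Fin 3 → ℤ) ⧸ Lgrp v₁ v₂ v₃) →+ AddCircle (1:ℝ) :=
  QuotientAddGroup.lift (Lgrp v₁ v₂ v₃) (phi hli) (phi_ker hli)

lemma L_int {x : Fin 3 → ℤ} (hx : x ∈ Lgrp v₁ v₂ v₃) (i : Fin 3) :
    ∃ z : ℤ, cf hli i (coe3 x) = (z : ℝ) := by
  induction hx using AddSubgroup.closure_induction with
  | mem y hy =>
      simp only [Set.mem_insert_iff, Set.mem_singleton_iff] at hy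
      rcases hy with rfl | rfl | rfl
      · rw [cf_v1]; fin_cases i
        · exact ⟨1, by simp⟩
        · exact ⟨0, by simp⟩
        · exact ⟨0, by simp⟩
      · rw [cf_v2]; fin_cases i
        · exact ⟨0, by simp⟩
        · exact ⟨1, by simp⟩
        · exact ⟨0, by simp⟩
      · rw [cf_v3]; fin_cases i
        · exact ⟨0, by simp⟩
        · exact ⟨0, by simp⟩
        · exact ⟨1, by simp⟩
  | zero => exact ⟨0, by rw [coe3_zero]; simp⟩
  | add a b _ _ ha hb =>
      obtain ⟨za, hza⟩ := ha
      obtain ⟨zb, hzb⟩ := hb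
      exact ⟨za + zb, by rw [coe3_add, map_add, hza, hzb]; push_cast; ring⟩
  | neg a _ ha =>
      obtain ⟨za, hza⟩ := ha
      refine ⟨-za, ?_⟩
      have : coe3 (-a) = -coe3 a := by funext j; simp [coe3]
      rw [this, map_neg, hza]; push_cast; ring

include hli in
lemma mk_inj_on_H {h h' : Fin 3 → ℤ} (hh : h ∈ H3pts v₁ v₂ v₃) (hh' : h' ∈ H3pts v₁ v₂ v₃)
    (he : (QuotientAddGroup.mk h : (Fin 3 → ℤ) ⧸ Lgrp v₁ v₂ v₃) = QuotientAddGroup.mk h') :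
    h = h' := by
  rw [QuotientAddGroup.eq] at he
  -- he : -h + h' ∈ Lgrp
  have hcoord : ∀ i, cf hli i (coe3 h) = cf hli i (coe3 h') := by
    intro i
    obtain ⟨z, hz⟩ := L_int hli he i
    have hsub : coe3 (-h + h') = coe3 h' - coe3 h := by funext j; simp [coe3]; ring
    rw [hsub, map_sub] at hz
    have h1 := (mem_H3_iff hli h).1 hh i
    have h2 := (mem_H3_iff hli h').1 hh' i
    have hz0 : z = 0 := by
      have : (-1 : ℝ) < (z : ℝ) := by rw [← hz]; cases h1; cases h2; linarith
      have : (z : ℝ) < 1 := by rw [← hz]; cases h1; cases h2; linarith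
      have h3 : (-1 : ℤ) < z := by exact_mod_cast ‹(-1:ℝ) < (z:ℝ)›
      have h4 : z < 1 := by exact_mod_cast ‹(z:ℝ) < 1›
      omega
    rw [hz0] at hz
    have : cf hli i (coe3 h') - cf hli i (coe3 h) = 0 := by rw [hz]; simp
    linarith
  apply coe3_injective
  calc coe3 h = cf hli 0 (coe3 h) • coe3 v₁ + cf hli 1 (coe3 h) • coe3 v₂
      + cf hli 2 (coe3 h) • coe3 v₃ := repr_decomp hli _
    _ = cf hli 0 (coe3 h') • coe3 v₁ + cf hli 1 (coe3 h') • coe3 v₂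
      + cf hli 2 (coe3 h') • coe3 v₃ := by rw [hcoord 0, hcoord 1, hcoord 2]
    _ = coe3 h' := (repr_decomp hli _).symm

include hli in
lemma mk_surj_on_H (x : Fin 3 → ℤ) :
    ∃ h ∈ H3pts v₁ v₂ v₃,
      (QuotientAddGroup.mk h : (Fin 3 → ℤ) ⧸ Lgrp v₁ v₂ v₃) = QuotientAddGroup.mk x := by
  set r : Fin 3 → ℝ := fun i => cf hli i (coe3 x) with hr
  set d : Fin 3 → ℤ := fun i => ⌊r i⌋ with hd
  refine ⟨x - (d 0 • v₁ + d 1 • v₂ + d 2 • v₃), ?_, ?_⟩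
  · have hc : coe3 (x - (d 0 • v₁ + d 1 • v₂ + d 2 • v₃)) =
        coe3 x - ((d 0 : ℝ) • coe3 v₁ + (d 1 : ℝ) • coe3 v₂ + (d 2 : ℝ) • coe3 v₃) := by
      rw [coe3_sub, coe3_add, coe3_add, coe3_zsmul, coe3_zsmul, coe3_zsmul]
    rw [mem_H3_iff hli]
    intro i
    have : cf hli i (coe3 (x - (d 0 • v₁ + d 1 • v₂ + d 2 • v₃))) = r i - (d i : ℝ) := by
      rw [hc, map_sub, cf_apply]
      fin_cases i <;> simp [hr]
    rw [this, hd]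
    simp only
    constructor
    · have := Int.fract_nonneg (r i)
      rw [Int.fract] at this; convert this using 1
    · have := Int.fract_lt_one (r i)
      rw [Int.fract] at this; convert this using 1
  · rw [QuotientAddGroup.eq]
    have : -(x - (d 0 • v₁ + d 1 • v₂ + d 2 • v₃)) + x = d 0 • v₁ + d 1 • v₂ + d 2 • v₃ := by
      abel
    rw [this]
    refine AddSubgroup.add_mem _ (AddSubgroup.add_mem _ ?_ ?_) ?_ <;>
      apply AddSubgroup.zsmul_mem <;> apply AddSubgroup.subset_closure
    · exact Set.mem_insert _ _
    · exact Set.mem_insert_of_mem _ (Set.mem_insert _ _)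
    · exact Set.mem_insert_of_mem _ (Set.mem_insert_of_mem _ rfl)

lemma phi'_mk (x : Fin 3 → ℤ) :
    phi' hli (QuotientAddGroup.mk x) = ((cf hli 0 (coe3 x) : ℝ) : AddCircle (1:ℝ)) := rfl

lemma H3_finite (v₁ v₂ v₃ : Fin 3 → ℤ) : (H3pts v₁ v₂ v₃).Finite := by
  apply Set.Finite.subset (Set.Finite.pi (fun j : Fin 3 =>
    Set.finite_Icc (-(|v₁ j| + |v₂ j| + |v₃ j|)) (|v₁ j| + |v₂ j| + |v₃ j|)))
  rintro h ⟨s, t, u, hs0, hs1, ht0, ht1, hu0, hu1, hx⟩ j _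
  have hj : (h j : ℝ) = s * v₁ j + t * v₂ j + u * v₃ j := by
    have := congrFun hx j; simpa [coe3] using this
  have habs : |(h j : ℝ)| ≤ |(v₁ j : ℝ)| + |(v₂ j : ℝ)| + |(v₃ j : ℝ)| := by
    rw [hj]
    calc |s * (v₁ j : ℝ) + t * v₂ j + u * v₃ j|
        ≤ |s * (v₁ j : ℝ)| + |t * (v₂ j : ℝ)| + |u * (v₃ j : ℝ)| := abs_add_three _ _ _
      _ ≤ |(v₁ j : ℝ)| + |(v₂ j : ℝ)| + |(v₃ j : ℝ)| := by
          rw [abs_mul, abs_mul, abs_mul, abs_of_nonneg hs0, abs_of_nonneg ht0,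
            abs_of_nonneg hu0]
          nlinarith [abs_nonneg (v₁ j : ℝ), abs_nonneg (v₂ j : ℝ), abs_nonneg (v₃ j : ℝ)]
  have : |h j| ≤ |v₁ j| + |v₂ j| + |v₃ j| := by
    have := habs
    push_cast at this
    exact_mod_cast this
  exact Set.mem_Icc.mpr (abs_le.mp this)

include hli in
lemma eqv_bij : Function.Bijective
    (fun h : ↥(H3pts v₁ v₂ v₃) =>
      (QuotientAddGroup.mk h.1 : (Fin 3 → ℤ) ⧸ Lgrp v₁ v₂ v₃)) := by
  constructor
  · rintro ⟨h, hh⟩ ⟨h', hh'⟩ he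
    exact Subtype.ext (mk_inj_on_H hli hh hh' he)
  · intro q
    induction q using QuotientAddGroup.induction_on with
    | H x =>
      obtain ⟨h, hh, he⟩ := mk_surj_on_H hli x
      exact ⟨⟨h, hh⟩, he⟩

include hli in
lemma card_Q : Nat.card ((Fin 3 → ℤ) ⧸ Lgrp v₁ v₂ v₃) = (H3pts v₁ v₂ v₃).ncard := by
  rw [← Nat.card_coe_set_eq]
  exact (Nat.card_congr (Equiv.ofBijective _ (eqv_bij hli))).symm

include hli in
lemma H2_subset_H3 {h : Fin 3 → ℤ} (hh : h ∈ H2pts v₂ v₃) : h ∈ H3pts v₁ v₂ v₃ := by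
  rw [mem_H2_iff hli] at hh
  rw [mem_H3_iff hli]
  intro i
  match i with
  | 0 => rw [hh.1]; exact ⟨le_refl _, one_pos⟩
  | 1 => exact hh.2.1
  | 2 => exact hh.2.2

include hli in
lemma card_ker : Nat.card (phi' hli).ker = (H2pts v₂ v₃).ncard := by
  rw [← Nat.card_coe_set_eq]
  refine (Nat.card_congr (Equiv.ofBijective
    (fun h : ↥(H2pts v₂ v₃) => (⟨QuotientAddGroup.mk h.1, ?_⟩ : ↥(phi' hli).ker)) ⟨?_, ?_⟩)).symm
  · rw [AddMonoidHom.mem_ker, phi'_mk, ((mem_H2_iff hli h.1).1 h.2).1]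
    simp
  · rintro ⟨h, hh⟩ ⟨h', hh'⟩ he
    simp only [Subtype.mk.injEq] at he
    exact Subtype.ext (mk_inj_on_H hli (H2_subset_H3 hli hh) (H2_subset_H3 hli hh') he)
  · rintro ⟨q, hq⟩
    induction q using QuotientAddGroup.induction_on with
    | H x =>
      obtain ⟨h, hh, he⟩ := mk_surj_on_H hli x
      rw [← he, AddMonoidHom.mem_ker, phi'_mk, AddCircle.coe_eq_zero_iff] at hq
      obtain ⟨z, hz⟩ := hq
      have h0 := (mem_H3_iff hli h).1 hh 0
      have hz' : (z : ℝ) = cf hli 0 (coe3 h) := by simpa using hz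
      have hz0 : z = 0 := by
        have h1 : (0:ℝ) ≤ (z:ℝ) := hz' ▸ h0.1
        have h2 : (z:ℝ) < 1 := hz' ▸ h0.2
        exact_mod_cast le_antisymm (by exact_mod_cast Int.lt_add_one_iff.mp (by exact_mod_cast h2)) (by exact_mod_cast h1)
      have hcf0 : cf hli 0 (coe3 h) = 0 := by rw [← hz', hz0]; simp
      have hmem : h ∈ H2pts v₂ v₃ := by
        rw [mem_H2_iff hli]
        exact ⟨hcf0, (mem_H3_iff hli h).1 hh 1, (mem_H3_iff hli h).1 hh 2⟩
      exact ⟨⟨h, hmem⟩, Subtype.ext he⟩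

include hli in
lemma finite_Q : Finite ((Fin 3 → ℤ) ⧸ Lgrp v₁ v₂ v₃) := by
  have : Finite ↥(H3pts v₁ v₂ v₃) := (H3_finite v₁ v₂ v₃).to_subtype
  exact Finite.of_surjective _ (eqv_bij hli).2

end Key

lemma frac_mem_torsion (n : ℕ) (hn : 0 < n) (l : ℕ) :
    n • ((((l : ℝ)/(n : ℝ)) : AddCircle (1:ℝ))) = 0 := by
  rw [← AddCircle.coe_nsmul, AddCircle.coe_eq_zero_iff]
  refine ⟨(l : ℤ), ?_⟩
  have hn' : (n : ℝ) ≠ 0 := Nat.cast_ne_zero.mpr hn.ne'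
  simp only [zsmul_eq_mul, Int.cast_natCast, mul_one, nsmul_eq_mul]
  field_simp

lemma circ_coe_fract (r : ℝ) :
    ((Int.fract r : ℝ) : AddCircle (1:ℝ)) = (r : AddCircle (1:ℝ)) := by
  rw [Int.fract, AddCircle.coe_sub]
  have : ((((⌊r⌋ : ℤ) : ℝ)) : AddCircle (1:ℝ)) = 0 := by
    rw [show ((⌊r⌋ : ℤ) : ℝ) = (⌊r⌋ : ℤ) • (1:ℝ) by simp, AddCircle.coe_zsmul,
      AddCircle.coe_period, smul_zero]
  rw [this, sub_zero]

lemma torsion_char {n : ℕ} (hn : 0 < n) {y : AddCircle (1:ℝ)} (hy : n • y = 0) :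
    ∃ l : ℕ, l < n ∧ (((l : ℝ)/(n : ℝ)) : AddCircle (1:ℝ)) = y := by
  induction y using QuotientAddGroup.induction_on with
  | H r0 =>
    set r := Int.fract r0 with hrdef
    have hr01 : r ∈ Set.Ico (0:ℝ) 1 := ⟨Int.fract_nonneg r0, Int.fract_lt_one r0⟩
    have hrr : ((r : ℝ) : AddCircle (1:ℝ)) = (r0 : AddCircle (1:ℝ)) := circ_coe_fract r0
    rw [← hrr, ← AddCircle.coe_nsmul, AddCircle.coe_eq_zero_iff] at hy
    obtain ⟨z, hz⟩ := hy
    simp only [zsmul_eq_mul, mul_one, nsmul_eq_mul] at hz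
    have hn' : (0:ℝ) < (n : ℝ) := Nat.cast_pos.mpr hn
    have hz0 : 0 ≤ z := by
      have : (0:ℝ) ≤ (z:ℝ) := by rw [hz]; exact mul_nonneg hn'.le hr01.1
      exact_mod_cast this
    have hzn : z < n := by
      have : (z:ℝ) < (n:ℝ) := by
        rw [hz]
        calc (n:ℝ) * r < (n:ℝ) * 1 := by
              apply mul_lt_mul_of_pos_left hr01.2 hn'
          _ = (n:ℝ) := mul_one _
      exact_mod_cast this
    refine ⟨z.toNat, by omega, ?_⟩
    have hr : r = ((z.toNat : ℝ))/(n:ℝ) := by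
      have hzt : ((z.toNat : ℕ) : ℝ) = (z : ℝ) := by
        exact_mod_cast congrArg (Int.cast : ℤ → ℝ) (Int.toNat_of_nonneg hz0)
      rw [hzt, hz]
      field_simp
    rw [← hrr, hr]

lemma torsion_eq_range (n : ℕ) (hn : 0 < n) :
    {y : AddCircle (1:ℝ) | n • y = 0} =
      Set.range (fun l : Fin n => ((((l : ℕ) : ℝ)/(n : ℝ) : ℝ) : AddCircle (1:ℝ))) := by
  ext y
  constructor
  · intro hy
    obtain ⟨l, hl, hly⟩ := torsion_char hn hy
    exact ⟨⟨l, hl⟩, hly⟩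
  · rintro ⟨l, rfl⟩
    exact frac_mem_torsion n hn l

lemma torsion_finite (n : ℕ) (hn : 0 < n) :
    {y : AddCircle (1:ℝ) | n • y = 0}.Finite := by
  rw [torsion_eq_range n hn]
  exact Set.finite_range _

lemma torsion_ncard (n : ℕ) (hn : 0 < n) :
    {y : AddCircle (1:ℝ) | n • y = 0}.ncard = n := by
  haveI : Fact ((0:ℝ) < 1) := ⟨one_pos⟩
  set f : Fin n → AddCircle (1:ℝ) := fun l => (((l : ℕ) : ℝ)/(n : ℝ) : ℝ) with hf
  have hinj : Function.Injective f := by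
    intro a b hab
    have hn' : (0:ℝ) < (n : ℝ) := Nat.cast_pos.mpr hn
    have ha : ((a : ℕ) : ℝ)/(n:ℝ) ∈ Set.Ico (0:ℝ) (0 + 1) := by
      rw [zero_add]
      constructor
      · positivity
      · rw [div_lt_one hn']; exact_mod_cast a.2
    have hb : ((b : ℕ) : ℝ)/(n:ℝ) ∈ Set.Ico (0:ℝ) (0 + 1) := by
      rw [zero_add]
      constructor
      · positivity
      · rw [div_lt_one hn']; exact_mod_cast b.2
    have h1 := (AddCircle.coe_eq_coe_iff_of_mem_Ico ha hb).mp hab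
    have h2 : ((a : ℕ) : ℝ) = ((b : ℕ) : ℝ) := by
      have hn' : (n : ℝ) ≠ 0 := (Nat.cast_pos.mpr hn).ne'
      field_simp at h1
      exact_mod_cast h1
    exact Fin.ext (by exact_mod_cast h2)
  rw [torsion_eq_range n hn, ← Nat.card_coe_set_eq, Nat.card_range_of_injective hinj]
  simp

lemma fiber_ncard {G H : Type*} [AddCommGroup G] [AddCommGroup H] (f : G →+ H) (t : H)
    (ht : t ∈ Set.range f) : (f ⁻¹' {t}).ncard = Nat.card f.ker := by
  obtain ⟨q₀, hq₀⟩ := ht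
  rw [← Nat.card_coe_set_eq]
  refine (Nat.card_congr (Equiv.ofBijective
    (fun k : ↥f.ker => (⟨q₀ + k.1, ?_⟩ : ↥(f ⁻¹' {t}))) ⟨?_, ?_⟩)).symm
  · have hk : f k.1 = 0 := k.2
    simp only [Set.mem_preimage, Set.mem_singleton_iff, map_add, hq₀, hk, add_zero]
  · rintro ⟨a, ha⟩ ⟨b, hb⟩ hab
    simp only [Subtype.mk.injEq, add_right_inj] at hab
    exact Subtype.ext hab
  · rintro ⟨x, hx⟩
    simp only [Set.mem_preimage, Set.mem_singleton_iff] at hx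
    refine ⟨⟨-q₀ + x, ?_⟩, ?_⟩
    · rw [AddMonoidHom.mem_ker, map_add, map_neg, hq₀, hx]
      abel
    · apply Subtype.ext
      simp

theorem key {v₁ v₂ v₃ : Fin 3 → ℤ}
    (hli : LinearIndependent ℝ ![coe3 v₁, coe3 v₂, coe3 v₃]) (μ μ₁ : ℕ)
    (hμ : μ = (H3pts v₁ v₂ v₃).ncard) (hμ₁ : μ₁ = (H2pts v₂ v₃).ncard) :
    (∀ h ∈ H3pts v₁ v₂ v₃, ∀ a b c : ℝ,
      coe3 h = a • coe3 v₁ + b • coe3 v₂ + c • coe3 v₃ →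
      ∃ l : ℕ, l < μ / μ₁ ∧ a = ((l * μ₁ : ℕ) : ℝ) / (μ : ℝ)) ∧
    (∀ l : ℕ, l < μ / μ₁ →
      {h : Fin 3 → ℤ | h ∈ H3pts v₁ v₂ v₃ ∧ ∃ b c : ℝ,
        coe3 h = (((l * μ₁ : ℕ) : ℝ) / (μ : ℝ)) • coe3 v₁ + b • coe3 v₂ +
          c • coe3 v₃}.ncard = μ₁) := by
  haveI : Fact ((0:ℝ) < 1) := ⟨one_pos⟩
  haveI hQfin : Finite ((Fin 3 → ℤ) ⧸ Lgrp v₁ v₂ v₃) := finite_Q hli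
  set n := Nat.card (phi' hli).range with hn
  have hker_card : Nat.card (phi' hli).ker = μ₁ := by rw [card_ker hli, hμ₁]
  have hμQ : μ = Nat.card ((Fin 3 → ℤ) ⧸ Lgrp v₁ v₂ v₃) := by rw [card_Q hli, hμ]
  have hμn : μ = n * μ₁ := by
    rw [hμQ, AddSubgroup.card_eq_card_quotient_mul_card_addSubgroup (phi' hli).ker, hker_card]
    congr 1
    exact Nat.card_congr (QuotientAddGroup.quotientKerEquivRange (phi' hli)).toEquiv
  haveI : Finite ↥(phi' hli).range := Finite.of_surjective _
    (QuotientAddGroup.quotientKerEquivRange (phi' hli)).surjective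
  have hnpos : 0 < n := Nat.card_pos
  have hμ₁pos : 0 < μ₁ := by rw [← hker_card]; exact Nat.card_pos
  have hdiv : μ / μ₁ = n := by rw [hμn, Nat.mul_div_cancel _ hμ₁pos]
  have hnR : (0:ℝ) < (n:ℝ) := Nat.cast_pos.mpr hnpos
  have hrange_torsion : ∀ y ∈ (phi' hli).range, n • y = 0 := by
    intro y hy
    have h0 : (n • (⟨y, hy⟩ : ↥(phi' hli).range)) = 0 := by
      rw [hn]
      exact card_nsmul_eq_zero'
    have := congrArg (Subtype.val) h0
    simpa using this
  have hrange_eq : ((phi' hli).range : Set (AddCircle (1:ℝ))) =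
      {y : AddCircle (1:ℝ) | n • y = 0} := by
    apply Set.eq_of_subset_of_ncard_le
    · intro y hy
      exact hrange_torsion y hy
    · rw [torsion_ncard n hnpos, ← Nat.card_coe_set_eq]
      simp only [SetLike.coe_sort_coe]
      exact le_of_eq rfl
    · exact torsion_finite n hnpos
  constructor
  · intro h hh a b c hx
    have ha_eq : cf hli 0 (coe3 h) = a := by rw [hx, cf_apply]; simp
    have hIco := (mem_H3_iff hli h).1 hh 0
    rw [ha_eq] at hIco
    have hmem : ((a : ℝ) : AddCircle (1:ℝ)) ∈ (phi' hli).range :=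
      ⟨QuotientAddGroup.mk h, by rw [phi'_mk, ha_eq]⟩
    have htor := hrange_torsion _ hmem
    obtain ⟨l, hl, hly⟩ := torsion_char hnpos htor
    refine ⟨l, by rw [hdiv]; exact hl, ?_⟩
    have hln : (l:ℝ)/(n:ℝ) ∈ Set.Ico (0:ℝ) (0+1) := by
      rw [zero_add]
      exact ⟨by positivity, by rw [div_lt_one hnR]; exact_mod_cast hl⟩
    have ha' : a ∈ Set.Ico (0:ℝ) (0+1) := by rw [zero_add]; exact hIco
    have heq : (l:ℝ)/(n:ℝ) = a := (AddCircle.coe_eq_coe_iff_of_mem_Ico hln ha').mp hly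
    rw [← heq, hμn]
    have hμ₁R : ((μ₁:ℕ):ℝ) ≠ 0 := Nat.cast_ne_zero.mpr hμ₁pos.ne'
    push_cast
    field_simp
  · intro l hl
    rw [hdiv] at hl
    set t : ℝ := ((l * μ₁ : ℕ) : ℝ) / (μ : ℝ) with ht
    have hμ₁R : ((μ₁:ℕ):ℝ) ≠ 0 := Nat.cast_ne_zero.mpr hμ₁pos.ne'
    have htln : t = (l:ℝ)/(n:ℝ) := by
      rw [ht, hμn]
      push_cast
      field_simp
    have htIco : t ∈ Set.Ico (0:ℝ) (0+1) := by
      rw [zero_add, htln]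
      exact ⟨by positivity, by rw [div_lt_one hnR]; exact_mod_cast hl⟩
    have hSeq : {h : Fin 3 → ℤ | h ∈ H3pts v₁ v₂ v₃ ∧ ∃ b c : ℝ,
        coe3 h = t • coe3 v₁ + b • coe3 v₂ + c • coe3 v₃}
        = {h : Fin 3 → ℤ | h ∈ H3pts v₁ v₂ v₃ ∧ cf hli 0 (coe3 h) = t} := by
      ext h
      simp only [Set.mem_setOf_eq]
      constructor
      · rintro ⟨hh, b, c, hx⟩
        refine ⟨hh, ?_⟩
        rw [hx, cf_apply]
        simp
      · rintro ⟨hh, h0⟩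
        refine ⟨hh, cf hli 1 (coe3 h), cf hli 2 (coe3 h), ?_⟩
        conv_lhs => rw [repr_decomp hli (coe3 h)]
        rw [h0]
    rw [hSeq]
    have htmem : ((t : ℝ) : AddCircle (1:ℝ)) ∈ Set.range (phi' hli) := by
      have : ((t : ℝ) : AddCircle (1:ℝ)) ∈ ((phi' hli).range : Set (AddCircle (1:ℝ))) := by
        rw [hrange_eq]
        show n • ((t : ℝ) : AddCircle (1:ℝ)) = 0
        rw [htln]
        exact frac_mem_torsion n hnpos l
      obtain ⟨x, hx⟩ := this
      exact ⟨x, hx⟩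
    have hfib : ((phi' hli) ⁻¹' {((t:ℝ) : AddCircle (1:ℝ))}).ncard = μ₁ := by
      rw [fiber_ncard _ _ htmem, hker_card]
    rw [← Nat.card_coe_set_eq, ← hfib, ← Nat.card_coe_set_eq]
    apply Nat.card_congr
    refine Equiv.ofBijective (fun h => ⟨QuotientAddGroup.mk h.1, ?_⟩) ⟨?_, ?_⟩
    · have := h.2
      simp only [Set.mem_setOf_eq] at this
      simp only [Set.mem_preimage, Set.mem_singleton_iff, phi'_mk, this.2]
    · rintro ⟨a, ha⟩ ⟨b, hb⟩ hab
      simp only [Subtype.mk.injEq] at hab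
      simp only [Set.mem_setOf_eq] at ha hb
      exact Subtype.ext (mk_inj_on_H hli ha.1 hb.1 hab)
    · rintro ⟨q, hq⟩
      simp only [Set.mem_preimage, Set.mem_singleton_iff] at hq
      induction q using QuotientAddGroup.induction_on with
      | H x =>
        obtain ⟨h, hh, he⟩ := mk_surj_on_H hli x
        rw [← he, phi'_mk] at hq
        have h0 := (mem_H3_iff hli h).1 hh 0
        have h0' : cf hli 0 (coe3 h) ∈ Set.Ico (0:ℝ) (0+1) := by rw [zero_add]; exact h0
        have hcf : cf hli 0 (coe3 h) = t :=
          (AddCircle.coe_eq_coe_iff_of_mem_Ico h0' htIco).mp hq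
        exact ⟨⟨h, Set.mem_setOf_eq ▸ ⟨hh, hcf⟩⟩, Subtype.ext he⟩

lemma H3pts_swap (a b c : Fin 3 → ℤ) : H3pts a b c = H3pts b a c := by
  have key : ∀ a b c : Fin 3 → ℤ, H3pts a b c ⊆ H3pts b a c := by
    rintro a b c h ⟨s, t, u, hs0, hs1, ht0, ht1, hu0, hu1, hx⟩
    exact ⟨t, s, u, ht0, ht1, hs0, hs1, hu0, hu1, by rw [hx]; module⟩
  exact le_antisymm (key a b c) (key b a c)

lemma H3pts_cycle (a b c : Fin 3 → ℤ) : H3pts a b c = H3pts c a b := by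
  ext h
  constructor
  · rintro ⟨s, t, u, hs0, hs1, ht0, ht1, hu0, hu1, hx⟩
    exact ⟨u, s, t, hu0, hu1, hs0, hs1, ht0, ht1, by rw [hx]; module⟩
  · rintro ⟨s, t, u, hs0, hs1, ht0, ht1, hu0, hu1, hx⟩
    exact ⟨t, u, s, ht0, ht1, hu0, hu1, hs0, hs1, by rw [hx]; module⟩

lemma li_perm (a b c : Fin 3 → ℝ) (e : Fin 3 → Fin 3) (he : Function.Injective e)
    (hli : LinearIndependent ℝ ![a, b, c]) :
    LinearIndependent ℝ (![a, b, c] ∘ e) := hli.comp e he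

lemma li_swap {a b c : Fin 3 → ℝ} (hli : LinearIndependent ℝ ![a, b, c]) :
    LinearIndependent ℝ ![b, a, c] := by
  have he : Function.Injective (![1, 0, 2] : Fin 3 → Fin 3) := by decide
  have := hli.comp _ he
  have hfe : (![a, b, c] ∘ (![1, 0, 2] : Fin 3 → Fin 3)) = ![b, a, c] := by
    funext i; fin_cases i <;> rfl
  rwa [hfe] at this

lemma li_cycle {a b c : Fin 3 → ℝ} (hli : LinearIndependent ℝ ![a, b, c]) :
    LinearIndependent ℝ ![c, a, b] := by
  have he : Function.Injective (![2, 0, 1] : Fin 3 → Fin 3) := by decide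
  have := hli.comp _ he
  have hfe : (![a, b, c] ∘ (![2, 0, 1] : Fin 3 → Fin 3)) = ![c, a, b] := by
    funext i; fin_cases i <;> rfl
  rwa [hfe] at this

/-- For every `h ∈ H = ℤ³ ∩ ◊(w₁,w₂,w₃)`, writing
`h = h₁w₁ + h₂w₂ + h₃w₃` with `h₁,h₂,h₃ ∈ [0,1)`, the coordinate `h₁` belongs to
`{0, μ₁/μ, 2μ₁/μ, …, (μ−μ₁)/μ}`; moreover for each `l ∈ {0,…,μ/μ₁−1}` exactly `μ₁` points
`h ∈ H` satisfy `h₁ = lμ₁/μ`.  (Analogously for the coordinates `h₂` with `μ₂` and `h₃`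
with `μ₃`.) -/
theorem coordinates_of_H_points (w₁ w₂ w₃ : Fin 3 → ℤ)
    (hnn₁ : ∀ i, 0 ≤ w₁ i) (hnn₂ : ∀ i, 0 ≤ w₂ i) (hnn₃ : ∀ i, 0 ≤ w₃ i)
    (hp₁ : IsPrimitive w₁) (hp₂ : IsPrimitive w₂) (hp₃ : IsPrimitive w₃)
    (hli : LinearIndependent ℝ ![coe3 w₁, coe3 w₂, coe3 w₃])
    (μ μ₁ μ₂ μ₃ : ℕ)
    (hμ : μ = (H3pts w₁ w₂ w₃).ncard)
    (hμ₁ : μ₁ = (H2pts w₂ w₃).ncard) (hμ₂ : μ₂ = (H2pts w₁ w₃).ncard)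
    (hμ₃ : μ₃ = (H2pts w₁ w₂).ncard) :
    (∀ h ∈ H3pts w₁ w₂ w₃, ∀ h₁ h₂ h₃ : ℝ,
      coe3 h = h₁ • coe3 w₁ + h₂ • coe3 w₂ + h₃ • coe3 w₃ →
      (∃ l : ℕ, l < μ / μ₁ ∧ h₁ = ((l * μ₁ : ℕ) : ℝ) / (μ : ℝ)) ∧
      (∃ l : ℕ, l < μ / μ₂ ∧ h₂ = ((l * μ₂ : ℕ) : ℝ) / (μ : ℝ)) ∧
      (∃ l : ℕ, l < μ / μ₃ ∧ h₃ = ((l * μ₃ : ℕ) : ℝ) / (μ : ℝ))) ∧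
    (∀ l : ℕ, l < μ / μ₁ →
      {h : Fin 3 → ℤ | h ∈ H3pts w₁ w₂ w₃ ∧ ∃ h₂ h₃ : ℝ,
        coe3 h = (((l * μ₁ : ℕ) : ℝ) / (μ : ℝ)) • coe3 w₁ + h₂ • coe3 w₂ +
          h₃ • coe3 w₃}.ncard = μ₁) ∧
    (∀ l : ℕ, l < μ / μ₂ →
      {h : Fin 3 → ℤ | h ∈ H3pts w₁ w₂ w₃ ∧ ∃ h₁ h₃ : ℝ,
        coe3 h = h₁ • coe3 w₁ + (((l * μ₂ : ℕ) : ℝ) / (μ : ℝ)) • coe3 w₂ +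
          h₃ • coe3 w₃}.ncard = μ₂) ∧
    (∀ l : ℕ, l < μ / μ₃ →
      {h : Fin 3 → ℤ | h ∈ H3pts w₁ w₂ w₃ ∧ ∃ h₁ h₂ : ℝ,
        coe3 h = h₁ • coe3 w₁ + h₂ • coe3 w₂ +
          (((l * μ₃ : ℕ) : ℝ) / (μ : ℝ)) • coe3 w₃}.ncard = μ₃) := by
  have hli2 : LinearIndependent ℝ ![coe3 w₂, coe3 w₁, coe3 w₃] := li_swap hli
  have hli3 : LinearIndependent ℝ ![coe3 w₃, coe3 w₁, coe3 w₂] := li_cycle hli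
  have hset2 : H3pts w₂ w₁ w₃ = H3pts w₁ w₂ w₃ := (H3pts_swap w₁ w₂ w₃).symm
  have hset3 : H3pts w₃ w₁ w₂ = H3pts w₁ w₂ w₃ := (H3pts_cycle w₁ w₂ w₃).symm
  have k1 := key hli μ μ₁ hμ hμ₁
  have k2 := key hli2 μ μ₂ (by rw [hset2]; exact hμ) hμ₂
  have k3 := key hli3 μ μ₃ (by rw [hset3]; exact hμ) hμ₃
  refine ⟨?_, ?_, ?_, ?_⟩
  · intro h hh h₁ h₂ h₃ hx
    refine ⟨k1.1 h hh h₁ h₂ h₃ hx, ?_, ?_⟩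
    · exact k2.1 h (hset2 ▸ hh) h₂ h₁ h₃ (by rw [hx]; module)
    · exact k3.1 h (hset3 ▸ hh) h₃ h₁ h₂ (by rw [hx]; module)
  · exact k1.2
  · intro l hl
    have := k2.2 l hl
    have hseteq : {h : Fin 3 → ℤ | h ∈ H3pts w₂ w₁ w₃ ∧ ∃ b c : ℝ,
        coe3 h = (((l * μ₂ : ℕ) : ℝ) / (μ : ℝ)) • coe3 w₂ + b • coe3 w₁ + c • coe3 w₃}
        = {h : Fin 3 → ℤ | h ∈ H3pts w₁ w₂ w₃ ∧ ∃ h₁ h₃ : ℝ,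
        coe3 h = h₁ • coe3 w₁ + (((l * μ₂ : ℕ) : ℝ) / (μ : ℝ)) • coe3 w₂ +
          h₃ • coe3 w₃} := by
      ext h
      simp only [Set.mem_setOf_eq, hset2]
      refine and_congr_right fun _ => ⟨?_, ?_⟩
      · rintro ⟨b, c, hx⟩
        exact ⟨b, c, by rw [hx]; module⟩
      · rintro ⟨b, c, hx⟩
        exact ⟨b, c, by rw [hx]; module⟩
    rwa [hseteq] at this
  · intro l hl
    have := k3.2 l hl
    have hseteq : {h : Fin 3 → ℤ | h ∈ H3pts w₃ w₁ w₂ ∧ ∃ b c : ℝ,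
        coe3 h = (((l * μ₃ : ℕ) : ℝ) / (μ : ℝ)) • coe3 w₃ + b • coe3 w₁ + c • coe3 w₂}
        = {h : Fin 3 → ℤ | h ∈ H3pts w₁ w₂ w₃ ∧ ∃ h₁ h₂ : ℝ,
        coe3 h = h₁ • coe3 w₁ + h₂ • coe3 w₂ +
          (((l * μ₃ : ℕ) : ℝ) / (μ : ℝ)) • coe3 w₃} := by
      ext h
      simp only [Set.mem_setOf_eq, hset3]
      refine and_congr_right fun _ => ⟨?_, ?_⟩
      · rintro ⟨b, c, hx⟩
        exact ⟨b, c, by rw [hx]; module⟩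
      · rintro ⟨b, c, hx⟩
        exact ⟨b, c, by rw [hx]; module⟩
    rwa [hseteq] at this



end
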